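/- Let ε > 0, Δξ > 0, 0 < k_min ≤ k_max, and 0 ≤ v_min ≤ v_max be real numbers. Suppose the cell values satisfy J > ε, φ ∈ (0, 1), k ∈ [k_min, k_max], and v := k·(1 − φ)² ∈ [v_min, v_max]; let w ∈ ℝ be the right-neighbor velocity v_{j+1}^n. Define the first-order moving-mesh update J' := J + (Δτ/Δξ)·(w − v), φ' := J·φ / J', k' := k, and v' := k·(1 − φ')². Define Δτ* := Δξ·min{J − ε, J·(1−φ)}/(v − w) if v > w, and Δτ* := +∞ otherwise. Define φ̌ := 1 − √(v_max/k) and φ̂ := 1 − √(v_min/k), and set Δτ** := Δξ·J·(φ − φ̌)/(φ̌·(w − v)) if v < w and k > v_max; Δτ** := Δξ·J·(φ̂ − φ)/(φ̂·(v − w)) if v > w; and Δτ** := +∞ otherwise. Then for every Δτ with 0 < Δτ < min{Δτ*, Δτ**}, the updated values satisfy J' > ε, φ' ∈ (0, 1), k' ∈ [k_min, k_max], and v' ∈ [v_min, v_max]. -/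

import Mathlib

private lemma div_bound_aux {Δτ Δξ A B r : ℝ} (hΔξ : 0 < Δξ) (hB : 0 < B)
    (hr : r = Δτ / Δξ) (hA : Δτ < Δξ * A / B) : r * B < A := by
  rw [lt_div_iff₀ hB] at hA
  rw [hr, div_mul_eq_mul_div, div_lt_iff₀ hΔξ]
  nlinarith

set_option maxHeartbeats 1000000 in
/-- Remark after Theorem 3.2: first-order bound preservation for the
sedimentation model, `v = k·(1−φ)²`.  The moving-mesh update preserves
`Ω = {J > ε, φ ∈ (0,1), k ∈ [k_min,k_max], v ∈ [v_min,v_max]}` under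
`0 < Δτ < min{Δτ*, Δτ**}` (with the convention that absent cases give `+∞`). -/
theorem stmt_7 (ε Δξ kmin kmax vmin vmax J φ k v w Δτ : ℝ)
    (hε : 0 < ε) (hΔξ : 0 < Δξ) (hkmin : 0 < kmin) (hkle : kmin ≤ kmax)
    (hv0 : 0 ≤ vmin) (hvle : vmin ≤ vmax)
    (hJ : ε < J) (hφ0 : 0 < φ) (hφ1 : φ < 1)
    (hk1 : kmin ≤ k) (hk2 : k ≤ kmax)
    (hvdef : v = k * (1 - φ) ^ 2)
    (hv1 : vmin ≤ v) (hv2 : v ≤ vmax)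
    (hΔτ : 0 < Δτ)
    (hstar : v > w → Δτ < Δξ * min (J - ε) (J * (1 - φ)) / (v - w))
    (hstar1 : v < w ∧ k > vmax →
      Δτ < Δξ * J * (φ - (1 - Real.sqrt (vmax / k))) /
        ((1 - Real.sqrt (vmax / k)) * (w - v)))
    (hstar2 : v > w →
      Δτ < Δξ * J * ((1 - Real.sqrt (vmin / k)) - φ) /
        ((1 - Real.sqrt (vmin / k)) * (v - w))) :
    ε < J + Δτ / Δξ * (w - v) ∧
    0 < J * φ / (J + Δτ / Δξ * (w - v)) ∧
    J * φ / (J + Δτ / Δξ * (w - v)) < 1 ∧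
    kmin ≤ k ∧ k ≤ kmax ∧
    vmin ≤ k * (1 - J * φ / (J + Δτ / Δξ * (w - v))) ^ 2 ∧
    k * (1 - J * φ / (J + Δτ / Δξ * (w - v))) ^ 2 ≤ vmax := by
  have hk0 : 0 < k := lt_of_lt_of_le hkmin hk1
  have hvmax0 : 0 ≤ vmax := le_trans hv0 hvle
  have hJ0 : 0 < J := lt_trans hε hJ
  have hv1' : vmin ≤ k * (1 - φ) ^ 2 := by rw [← hvdef]; exact hv1
  have hv2' : k * (1 - φ) ^ 2 ≤ vmax := by rw [← hvdef]; exact hv2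
  set r : ℝ := Δτ / Δξ with hr
  have hr0 : 0 < r := div_pos hΔτ hΔξ
  -- J' > ε
  have hJ' : ε < J + r * (w - v) := by
    rcases le_or_gt v w with h | h
    · nlinarith [mul_nonneg hr0.le (sub_nonneg.2 h)]
    · have h1 : Δτ < Δξ * (J - ε) / (v - w) := by
        refine lt_of_lt_of_le (hstar h) ?_
        gcongr
        · exact min_le_left _ _
      have h2 := div_bound_aux hΔξ (by linarith : (0:ℝ) < v - w) hr h1
      nlinarith
  -- J' > Jφ
  have hJφ : J * φ < J + r * (w - v) := by
    rcases le_or_gt v w with h | h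
    · nlinarith [mul_nonneg hr0.le (sub_nonneg.2 h)]
    · have h1 : Δτ < Δξ * (J * (1 - φ)) / (v - w) := by
        refine lt_of_lt_of_le (hstar h) ?_
        gcongr
        · exact min_le_right _ _
      have h2 := div_bound_aux hΔξ (by linarith : (0:ℝ) < v - w) hr h1
      nlinarith
  have hJ'pos : 0 < J + r * (w - v) := lt_trans hε hJ'
  have hφ'pos : 0 < J * φ / (J + r * (w - v)) := div_pos (by positivity) hJ'pos
  have hφ'1 : J * φ / (J + r * (w - v)) < 1 := (div_lt_one hJ'pos).2 hJφ
  refine ⟨hJ', hφ'pos, hφ'1, hk1, hk2, ?_, ?_⟩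
  -- lower bound vmin ≤ v'
  · set t : ℝ := Real.sqrt (vmin / k) with ht
    have ht0 : 0 ≤ t := Real.sqrt_nonneg _
    have ht2 : t ^ 2 = vmin / k := Real.sq_sqrt (by positivity)
    have hφt : t ≤ 1 - φ := by
      have h1 : vmin / k ≤ (1 - φ) ^ 2 := by
        rw [div_le_iff₀ hk0]; linarith
      calc t ≤ Real.sqrt ((1 - φ) ^ 2) := Real.sqrt_le_sqrt h1
        _ = 1 - φ := Real.sqrt_sq (by linarith)
    have hφ' : J * φ / (J + r * (w - v)) ≤ 1 - t := by
      rcases le_or_gt v w with h | h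
      · have hJle : J ≤ J + r * (w - v) := by
          nlinarith [mul_nonneg hr0.le (sub_nonneg.2 h)]
        calc J * φ / (J + r * (w - v)) ≤ J * φ / J := by
              apply div_le_div_of_nonneg_left (by positivity) hJ0 hJle
          _ = φ := by field_simp
          _ ≤ 1 - t := by linarith
      · have h1t : 0 < 1 - t := by linarith
        have h0 := hstar2 h
        rw [mul_assoc] at h0
        have h2 := div_bound_aux hΔξ (mul_pos h1t (by linarith : (0:ℝ) < v - w)) hr h0
        rw [div_le_iff₀ hJ'pos]
        linarith [h2]
    have h1 : t ≤ 1 - J * φ / (J + r * (w - v)) := by linarith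
    have h2 : t ^ 2 ≤ (1 - J * φ / (J + r * (w - v))) ^ 2 :=
      pow_le_pow_left₀ ht0 h1 2
    calc vmin = k * t ^ 2 := by rw [ht2]; field_simp
      _ ≤ _ := mul_le_mul_of_nonneg_left h2 hk0.le
  -- upper bound v' ≤ vmax
  · set s : ℝ := Real.sqrt (vmax / k) with hs
    have hs0 : 0 ≤ s := Real.sqrt_nonneg _
    have hs2 : s ^ 2 = vmax / k := Real.sq_sqrt (by positivity)
    have hφ' : 1 - s ≤ J * φ / (J + r * (w - v)) := by
      rcases le_or_gt k vmax with hkv | hkv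
      · have h1 : (1:ℝ) ≤ s := by
          rw [hs, show (1:ℝ) = Real.sqrt 1 from (Real.sqrt_one).symm]
          exact Real.sqrt_le_sqrt ((one_le_div hk0).2 hkv)
        linarith
      · have hφs : 1 - s ≤ φ := by
          have h1 : (1 - φ) ^ 2 ≤ vmax / k := by
            rw [le_div_iff₀ hk0]; linarith
          have : 1 - φ ≤ s := by
            calc 1 - φ = Real.sqrt ((1 - φ) ^ 2) := (Real.sqrt_sq (by linarith)).symm
              _ ≤ s := Real.sqrt_le_sqrt h1
          linarith
        rcases le_or_gt w v with h | h
        · have hJge : J + r * (w - v) ≤ J := by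
            nlinarith [mul_nonneg hr0.le (sub_nonneg.2 h)]
          calc 1 - s ≤ φ := hφs
            _ = J * φ / J := by field_simp
            _ ≤ J * φ / (J + r * (w - v)) :=
              div_le_div_of_nonneg_left (by positivity) hJ'pos hJge
        · have h1s : 0 < 1 - s := by
            have hlt : s < 1 := by
              rw [hs, show (1:ℝ) = Real.sqrt 1 from (Real.sqrt_one).symm]
              exact Real.sqrt_lt_sqrt (by positivity) ((div_lt_one hk0).2 hkv)
            linarith
          have h0 := hstar1 ⟨h, hkv⟩
          rw [mul_assoc] at h0
          have h2 := div_bound_aux hΔξ (mul_pos h1s (by linarith : (0:ℝ) < w - v)) hr h0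
          rw [le_div_iff₀ hJ'pos]
          linarith [h2]
    have h1 : 1 - J * φ / (J + r * (w - v)) ≤ s := by linarith
    have h2 : (1 - J * φ / (J + r * (w - v))) ^ 2 ≤ s ^ 2 :=
      pow_le_pow_left₀ (by linarith) h1 2
    calc k * (1 - J * φ / (J + r * (w - v))) ^ 2 ≤ k * s ^ 2 :=
        mul_le_mul_of_nonneg_left h2 hk0.le
      _ = vmax := by rw [hs2]; field_simp
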